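/- Let w ∈ ℝⁿ be nonincreasing (w_1 ≥ w_2 ≥ … ≥ w_n), let x ∈ ℝⁿ, and let σ be a permutation of {1,…,n} that sorts x nondecreasingly, i.e., x_{σ(1)} ≤ x_{σ(2)} ≤ … ≤ x_{σ(n)}. Define g ∈ ℝⁿ by g_{σ(k)} = w_k for k = 1,…,n. Then g is a supergradient of OWA_w at x: for every y ∈ ℝⁿ, OWA_w(y) ≤ OWA_w(x) + ⟨g, y − x⟩. -/
import Mathlib

/-- The vector `y` sorted in nondecreasing order. -/
noncomputable def sortVec {n : ℕ} (y : Fin n → ℝ) : Fin n → ℝ :=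
  y ∘ Tuple.sort y

/-- The ordered weighted average of `y` with weights `w`. -/
noncomputable def OWA {n : ℕ} (w y : Fin n → ℝ) : ℝ :=
  ∑ k, w k * sortVec y k

/-- With nonincreasing weights `w`, if `σ` sorts `x` nondecreasingly then the vector
`g` with `g (σ k) = w k` is a supergradient of `OWA w` at `x`:
`OWA w y ≤ OWA w x + ⟨g, y - x⟩` for all `y`. -/
theorem owa_supergradient {n : ℕ} (w : Fin n → ℝ) (hw : Antitone w)
    (x : Fin n → ℝ) (σ : Equiv.Perm (Fin n)) (hσ : Monotone (x ∘ σ))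
    (g : Fin n → ℝ) (hg : ∀ k, g (σ k) = w k) :
    ∀ y : Fin n → ℝ, OWA w y ≤ OWA w x + ∑ i, g i * (y i - x i) := by
  intro y
  have hgy : ∑ i, g i * y i = ∑ k, w k * y (σ k) := by
    rw [← Equiv.sum_comp σ (fun i => g i * y i)]
    simp [hg]
  have hgx : ∑ i, g i * x i = OWA w x := by
    rw [← Equiv.sum_comp σ (fun i => g i * x i)]
    have : x ∘ σ = x ∘ Tuple.sort x := Tuple.comp_sort_eq_comp_iff_monotone.mpr hσ
    simp only [OWA, sortVec, ← this]
    simp [hg, Function.comp]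
  have hrearr : OWA w y ≤ ∑ k, w k * y (σ k) := by
    have hav : Antivary w (sortVec y) := fun i j hij =>
      (hw.antivary (Tuple.monotone_sort y)) hij
    have := hav.sum_smul_le_sum_smul_comp_perm (σ := (Tuple.sort y)⁻¹ * σ)
    simpa [OWA, sortVec, smul_eq_mul, Function.comp] using this
  have hsub : ∑ i, g i * (y i - x i) = (∑ i, g i * y i) - ∑ i, g i * x i := by
    simp [mul_sub, Finset.sum_sub_distrib]
  rw [hsub, hgy, hgx]
  linarith
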